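/- Let R be a 2-primal ring and suppose f(x)·R[x]·g(x) ⊆ N_*(R)[x] for polynomials f, g ∈ R[x]. Then aRb ⊆ N_*(R) for every coefficient a of f and b of g. -/

import Mathlib

def IsPrimeTwoSided {R : Type*} [Ring R] (P : TwoSidedIdeal R) : Prop :=
  (P : Set R) ≠ Set.univ ∧ ∀ a b : R, (∀ r : R, a * r * b ∈ P) → a ∈ P ∨ b ∈ P

def primeRadical (R : Type*) [Ring R] : Set R :=
  { x | ∀ P : TwoSidedIdeal R, IsPrimeTwoSided P → x ∈ P }

def IsTwoPrimal (R : Type*) [Ring R] : Prop :=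
  primeRadical R = { x : R | IsNilpotent x }

theorem twoPrimal_coeff_mem_primeRadical (R : Type*) [Ring R]
    (h2 : IsTwoPrimal R) (f g : Polynomial R)
    (hfg : ∀ q : Polynomial R, ∀ k : ℕ, (f * q * g).coeff k ∈ primeRadical R) :
    ∀ i j : ℕ, ∀ r : R, f.coeff i * r * g.coeff j ∈ primeRadical R := by
  intro i j r P hP
  suffices h : (∀ i, f.coeff i ∈ P) ∨ (∀ j, g.coeff j ∈ P) by
    rcases h with h | h
    · exact P.mul_mem_right _ _ (P.mul_mem_right _ _ (h i))
    · exact P.mul_mem_left _ _ (h j)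
  by_contra hc
  push_neg at hc
  obtain ⟨⟨i0, hi0⟩, j0, hj0⟩ := hc
  classical
  have hmf : ∃ m, f.coeff m ∉ P := ⟨i0, hi0⟩
  have hng : ∃ n, g.coeff n ∉ P := ⟨j0, hj0⟩
  set m := Nat.find hmf with hm
  set n := Nat.find hng with hn
  have key : ∀ s : R, f.coeff m * s * g.coeff n ∈ P := by
    intro s
    have hS : (f * Polynomial.C s * g).coeff (m + n) ∈ P := hfg _ _ P hP
    rw [mul_assoc, Polynomial.coeff_mul] at hS
    have hmem : ((m, n)) ∈ Finset.HasAntidiagonal.antidiagonal (m + n) := by simp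
    rw [← Finset.add_sum_erase _ _ hmem] at hS
    have hrest : ∑ x ∈ (Finset.HasAntidiagonal.antidiagonal (m+n)).erase (m, n),
        f.coeff x.1 * (Polynomial.C s * g).coeff x.2 ∈ P := by
      refine sum_mem fun x hx => ?_
      rcases Finset.mem_erase.mp hx with ⟨hne, hx'⟩
      rw [Finset.HasAntidiagonal.mem_antidiagonal] at hx'
      rcases lt_or_ge x.1 m with hlt | hge
      · exact P.mul_mem_right _ _ (not_not.mp (Nat.find_min hmf hlt))
      · have hx2 : x.2 < n := by
          rcases Nat.lt_or_ge x.2 n with h | h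
          · exact h
          · exfalso; apply hne
            have h1 : x.1 = m := by omega
            have h2 : x.2 = n := by omega
            exact Prod.ext h1 h2
        have : g.coeff x.2 ∈ P := not_not.mp (Nat.find_min hng hx2)
        rw [Polynomial.coeff_C_mul]
        exact P.mul_mem_left _ _ (P.mul_mem_left _ _ this)
    have hterm : f.coeff m * (Polynomial.C s * g).coeff n ∈ P := by
      have := P.sub_mem hS hrest
      simpa using this
    rw [Polynomial.coeff_C_mul, ← mul_assoc] at hterm
    exact hterm
  rcases hP.2 _ _ key with h | h
  · exact Nat.find_spec hmf h
  · exact Nat.find_spec hng h
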